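/- Under the posterior π(κ | x, τ) ∝ κ^{a-1/2}(1-κ)^{-a-1} L((1/τ²)(1/κ-1)) e^{-κx²/2}, for each fixed τ > 0 and each fixed η ∈ (0,1), P(κ ≤ η | x, τ) → 1 as x → ∞. -/

import Mathlib

open MeasureTheory Filter Set Topology

/-- The unnormalized posterior density of the shrinkage coefficient `κ ∈ (0,1)`
given observation `x` and global parameter `τ`. -/
noncomputable def postDens (a : ℝ) (L : ℝ → ℝ) (τ x κ : ℝ) : ℝ :=
  κ ^ (a - 1/2) * (1 - κ) ^ (-a - 1) * L ((1 / τ ^ 2) * (1 / κ - 1)) *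
    Real.exp (-(κ * x ^ 2) / 2)

/-- Corollary 4.4: for each fixed `τ > 0` and each fixed `η ∈ (0,1)`,
`P(κ ≤ η | x, τ) → 1` as `x → ∞`. -/
theorem posterior_tail_robustness_prob (a K : ℝ) (ha : 0 < a) (hK : 0 < K)
    (L : ℝ → ℝ)
    (hLmeas : Measurable L)
    (hLpos : ∀ t > 0, 0 < L t)
    (hnorm : K * ∫ t in Ioi (0:ℝ), t ^ (-a - 1) * L t = 1)
    (τ η : ℝ) (hτ : 0 < τ) (hη : η ∈ Ioo (0:ℝ) 1) :
    Tendsto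
      (fun x : ℝ =>
        (∫ κ in Ioc (0:ℝ) η, postDens a L τ x κ) /
          (∫ κ in Ioo (0:ℝ) 1, postDens a L τ x κ))
      atTop (𝓝 1) := by
  obtain ⟨hη0, hη1⟩ := hη
  have hb : (0:ℝ) < τ ^ 2 := by positivity
  set φ : ℝ → ℝ := fun κ => (1 / τ ^ 2) * (1 / κ - 1) with hφdef
  set g : ℝ → ℝ := fun κ => κ ^ (a - 1/2) * (1 - κ) ^ (-a - 1) * L (φ κ) with hgdef
  have hφpos : ∀ κ ∈ Ioo (0:ℝ) 1, 0 < φ κ := by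
    rintro κ ⟨h0, h1⟩
    have h2 : (0:ℝ) < 1 / κ - 1 := by
      have : 1 < 1 / κ := by rw [one_div]; exact (one_lt_inv₀ h0).mpr h1
      linarith
    positivity
  have hgpos : ∀ κ ∈ Ioo (0:ℝ) 1, 0 < g κ := by
    rintro κ ⟨h0, h1⟩
    have hL := hLpos _ (hφpos κ ⟨h0, h1⟩)
    have h1κ : (0:ℝ) < 1 - κ := by linarith
    simp only [hgdef]
    positivity
  have hgmeas : Measurable g := by
    simp only [hgdef, hφdef]
    apply Measurable.mul
    apply Measurable.mul
    · fun_prop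
    · fun_prop
    · exact hLmeas.comp (by fun_prop)
  -- integrability of the prior density in the t-variable
  have hFint : IntegrableOn (fun t => t ^ (-a - 1) * L t) (Ioi (0:ℝ)) := by
    by_contra h
    rw [integral_undef h, mul_zero] at hnorm
    exact one_ne_zero hnorm.symm
  -- change of variables
  have hderiv : ∀ κ ∈ Ioo (0:ℝ) 1,
      HasDerivWithinAt φ ((1 / τ ^ 2) * (-(κ ^ 2)⁻¹)) (Ioo (0:ℝ) 1) κ := by
    rintro κ ⟨h0, _⟩
    have h2 : HasDerivAt φ (1 / τ ^ 2 * -(κ ^ 2)⁻¹) κ := by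
      simp only [hφdef, one_div]
      exact ((hasDerivAt_inv h0.ne').sub_const 1).const_mul _
    exact h2.hasDerivWithinAt
  have hinj : InjOn φ (Ioo (0:ℝ) 1) := by
    rintro κ₁ ⟨h01, _⟩ κ₂ ⟨h02, _⟩ h
    simp only [hφdef] at h
    have hτ2 : (1 / τ ^ 2 : ℝ) ≠ 0 := by positivity
    have h2 : 1 / κ₁ - 1 = 1 / κ₂ - 1 := mul_left_cancel₀ hτ2 h
    field_simp at h2
    linarith
  have himg : φ '' Ioo (0:ℝ) 1 = Ioi (0:ℝ) := by
    ext t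
    constructor
    · rintro ⟨κ, hκ, rfl⟩
      exact hφpos κ hκ
    · intro ht
      have ht0 : (0:ℝ) < t := ht
      refine ⟨1 / (1 + τ ^ 2 * t), ⟨by positivity, ?_⟩, ?_⟩
      · rw [div_lt_one (by positivity)]
        nlinarith
      · simp only [hφdef]
        have h1 : (1 + τ ^ 2 * t) ≠ 0 := by positivity
        field_simp
        ring
  have hHint : IntegrableOn
      (fun κ => |(1 / τ ^ 2) * (-(κ ^ 2)⁻¹)| • ((φ κ) ^ (-a - 1) * L (φ κ)))
      (Ioo (0:ℝ) 1) := by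
    have h := integrableOn_image_iff_integrableOn_abs_deriv_smul measurableSet_Ioo hderiv hinj
      (fun t => t ^ (-a - 1) * L t)
    rw [himg] at h
    exact h.mp hFint
  -- pointwise identity for the transformed density
  have hcore : ∀ κ ∈ Ioo (0:ℝ) 1,
      |(1 / τ ^ 2) * (-(κ ^ 2)⁻¹)| • ((φ κ) ^ (-a - 1) * L (φ κ))
        = (τ ^ 2) ^ a * (κ ^ (a - 1) * ((1 - κ) ^ (-a - 1) * L (φ κ))) := by
    rintro κ ⟨h0, h1⟩
    have h1κ : (0:ℝ) < 1 - κ := by linarith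
    have hφeq : φ κ = (1 - κ) / (τ ^ 2 * κ) := by
      simp only [hφdef]; field_simp
    have habs : |(1 / τ ^ 2) * (-(κ ^ 2)⁻¹)| = (1 / τ ^ 2) * (κ ^ 2)⁻¹ := by
      rw [abs_mul, abs_neg, abs_inv, abs_of_pos (show (0:ℝ) < 1 / τ ^ 2 by positivity),
        abs_of_pos (show (0:ℝ) < κ ^ 2 by positivity)]
    rw [smul_eq_mul, habs, hφeq]
    rw [Real.div_rpow h1κ.le (by positivity)]
    rw [Real.mul_rpow hb.le h0.le]
    rw [show (-a - 1 : ℝ) = -(a + 1) by ring, Real.rpow_neg hb.le, Real.rpow_neg h0.le]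
    have hk2 : (κ ^ 2 : ℝ)⁻¹ = κ ^ (-(2:ℝ)) := by
      rw [Real.rpow_neg h0.le, Real.rpow_two]
    have hτk : (τ ^ 2 : ℝ)⁻¹ = (τ ^ 2) ^ (-(1:ℝ)) := by
      rw [Real.rpow_neg hb.le, Real.rpow_one]
    have hκcomb : κ ^ (-(2:ℝ)) * (κ ^ (a + 1) : ℝ) = κ ^ (a - 1) := by
      rw [← Real.rpow_add h0]; ring_nf
    have hτcomb : (τ ^ 2 : ℝ) ^ (-(1:ℝ)) * ((τ ^ 2) ^ (a + 1) : ℝ) = (τ ^ 2) ^ a := by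
      rw [← Real.rpow_add hb]; ring_nf
    have hLnn : 0 ≤ L (φ κ) := by
      rw [hφeq] at *
      exact (hLpos _ (by positivity)).le
    rw [one_div, hk2, hτk]
    rw [div_eq_mul_inv, mul_inv, inv_inv, inv_inv]
    calc (τ ^ 2 : ℝ) ^ (-(1:ℝ)) * κ ^ (-(2:ℝ)) *
          ((1 - κ) ^ (-(a + 1)) * ((τ ^ 2) ^ (a + 1) * κ ^ (a + 1)) * L ((1 - κ) / (τ ^ 2 * κ)))
        = ((τ ^ 2) ^ (-(1:ℝ)) * (τ ^ 2) ^ (a + 1)) * ((κ ^ (-(2:ℝ)) * κ ^ (a + 1)) *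
            ((1 - κ) ^ (-(a + 1)) * L ((1 - κ) / (τ ^ 2 * κ)))) := by ring
      _ = (τ ^ 2) ^ a * (κ ^ (a - 1) * ((1 - κ) ^ (-(a + 1)) * L ((1 - κ) / (τ ^ 2 * κ)))) := by
          rw [hκcomb, hτcomb]
  -- the x-free part g is integrable on (0,1)
  have hgint : IntegrableOn g (Ioo (0:ℝ) 1) := by
    have hmajint : IntegrableOn
        (fun κ => (τ ^ 2) ^ (-a) * (|(1 / τ ^ 2) * (-(κ ^ 2)⁻¹)| • ((φ κ) ^ (-a - 1) * L (φ κ))))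
        (Ioo (0:ℝ) 1) := hHint.const_mul _
    refine Integrable.mono hmajint (hgmeas.aestronglyMeasurable.restrict) ?_
    rw [ae_restrict_iff' measurableSet_Ioo]
    filter_upwards with κ hκ
    obtain ⟨h0, h1⟩ := hκ
    have h1κ : (0:ℝ) < 1 - κ := by linarith
    have hLnn : 0 ≤ L (φ κ) := (hLpos _ (hφpos κ ⟨h0, h1⟩)).le
    rw [Real.norm_eq_abs, Real.norm_eq_abs, abs_of_nonneg (hgpos κ ⟨h0, h1⟩).le,
      hcore κ ⟨h0, h1⟩]
    rw [abs_of_nonneg]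
    · rw [← mul_assoc, ← Real.rpow_add hb]
      rw [show (-a + a : ℝ) = 0 by ring, Real.rpow_zero, one_mul]
      simp only [hgdef]
      have hκle : κ ^ (a - 1/2) ≤ κ ^ (a - 1) :=
        Real.rpow_le_rpow_of_exponent_ge h0 h1.le (by linarith)
      have : κ ^ (a - 1/2) * (1 - κ) ^ (-a - 1) * L (φ κ)
          ≤ κ ^ (a - 1) * (1 - κ) ^ (-a - 1) * L (φ κ) := by
        apply mul_le_mul_of_nonneg_right _ hLnn
        exact mul_le_mul_of_nonneg_right hκle (by positivity)
      linarith [this]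
    · have := hcore κ ⟨h0, h1⟩
      have h2 : 0 ≤ (τ ^ 2) ^ a * (κ ^ (a - 1) * ((1 - κ) ^ (-a - 1) * L (φ κ))) := by
        positivity
      have h3 : 0 ≤ |(1 / τ ^ 2) * (-(κ ^ 2)⁻¹)| • ((φ κ) ^ (-a - 1) * L (φ κ)) := by
        rw [this]; exact h2
      positivity
  -- posterior density as g times the Gaussian-type factor
  have hpost_eq : ∀ x κ : ℝ, postDens a L τ x κ = g κ * Real.exp (-(κ * x ^ 2) / 2) := by
    intro x κ
    simp only [postDens, hgdef, hφdef]
  -- subsets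
  have hsubη1 : Ioc (0:ℝ) η ⊆ Ioo (0:ℝ) 1 := fun κ hκ => ⟨hκ.1, lt_of_le_of_lt hκ.2 hη1⟩
  have hsubJη : Ioc (η/2) (3*η/4) ⊆ Ioc (0:ℝ) η := fun κ hκ =>
    ⟨lt_trans (by linarith) hκ.1, le_trans hκ.2 (by linarith)⟩
  have hsubJ1 : Ioc (η/2) (3*η/4) ⊆ Ioo (0:ℝ) 1 := fun κ hκ => hsubη1 (hsubJη hκ)
  have hsubT1 : Ioo η 1 ⊆ Ioo (0:ℝ) 1 := fun κ hκ => ⟨lt_trans hη0 hκ.1, hκ.2⟩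
  -- nonnegativity and integrability of the posterior density for each x
  have hfnn : ∀ x : ℝ, ∀ κ ∈ Ioo (0:ℝ) 1, 0 ≤ postDens a L τ x κ := by
    intro x κ hκ
    rw [hpost_eq]
    exact mul_nonneg (hgpos κ hκ).le (Real.exp_nonneg _)
  have hfint : ∀ x : ℝ, IntegrableOn (fun κ => postDens a L τ x κ) (Ioo (0:ℝ) 1) := by
    intro x
    have hfeq : (fun κ => postDens a L τ x κ)
        = fun κ => g κ * Real.exp (-(κ * x ^ 2) / 2) := funext (hpost_eq x)
    rw [hfeq]
    refine Integrable.mono hgint ((hgmeas.mul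
      (by fun_prop : Measurable fun κ : ℝ => Real.exp (-(κ * x ^ 2) / 2))).aestronglyMeasurable.restrict) ?_
    rw [ae_restrict_iff' measurableSet_Ioo]
    filter_upwards with κ hκ
    rw [Real.norm_eq_abs, Real.norm_eq_abs, abs_of_nonneg (hgpos κ hκ).le,
      abs_of_nonneg (mul_nonneg (hgpos κ hκ).le (Real.exp_nonneg _))]
    have h1 : Real.exp (-(κ * x ^ 2) / 2) ≤ 1 := by
      rw [Real.exp_le_one_iff]
      have : (0:ℝ) ≤ κ * x ^ 2 := mul_nonneg hκ.1.le (sq_nonneg x)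
      linarith
    calc g κ * Real.exp (-(κ * x ^ 2) / 2) ≤ g κ * 1 :=
          mul_le_mul_of_nonneg_left h1 (hgpos κ hκ).le
      _ = g κ := mul_one _
  -- the three pieces
  set N : ℝ → ℝ := fun x => ∫ κ in Ioc (0:ℝ) η, postDens a L τ x κ with hNdef
  set T : ℝ → ℝ := fun x => ∫ κ in Ioo η 1, postDens a L τ x κ with hTdef
  set c : ℝ := ∫ κ in Ioc (η/2) (3*η/4), g κ with hcdef
  set C : ℝ := ∫ κ in Ioo η 1, g κ with hCdef
  have hgJint : IntegrableOn g (Ioc (η/2) (3*η/4)) := hgint.mono_set hsubJ1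
  have hgTint : IntegrableOn g (Ioo η 1) := hgint.mono_set hsubT1
  have hgJnn : 0 ≤ᵐ[volume.restrict (Ioc (η/2) (3*η/4))] g := by
    filter_upwards [ae_restrict_mem measurableSet_Ioc] with κ hκ
    exact (hgpos κ (hsubJ1 hκ)).le
  have hc : 0 < c := by
    rw [hcdef, setIntegral_pos_iff_support_of_nonneg_ae hgJnn hgJint]
    refine lt_of_lt_of_le ?_ (measure_mono (show Ioc (η/2) (3*η/4) ⊆ _ from ?_))
    · rw [Real.volume_Ioc]
      exact ENNReal.ofReal_pos.mpr (by linarith)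
    · intro κ hκ
      exact ⟨(hgpos κ (hsubJ1 hκ)).ne', hκ⟩
  have hCnn : 0 ≤ C := setIntegral_nonneg measurableSet_Ioo
    (fun κ hκ => (hgpos κ (hsubT1 hκ)).le)
  -- lower bound for N
  have hNlow : ∀ x : ℝ, c * Real.exp (-(3*η/4 * x ^ 2) / 2) ≤ N x := by
    intro x
    have h1 : ∫ κ in Ioc (η/2) (3*η/4), g κ * Real.exp (-(3*η/4 * x ^ 2) / 2)
        ≤ ∫ κ in Ioc (η/2) (3*η/4), postDens a L τ x κ := by
      refine setIntegral_mono_on (hgJint.mul_const _)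
        (((hfint x).mono_set hsubJ1)) measurableSet_Ioc ?_
      intro κ hκ
      rw [hpost_eq]
      refine mul_le_mul_of_nonneg_left ?_ (hgpos κ (hsubJ1 hκ)).le
      apply Real.exp_le_exp.mpr
      have := mul_le_mul_of_nonneg_right hκ.2 (sq_nonneg x)
      linarith
    have h2 : ∫ κ in Ioc (η/2) (3*η/4), postDens a L τ x κ ≤ N x := by
      rw [hNdef]
      refine setIntegral_mono_set ((hfint x).mono_set hsubη1) ?_
        (HasSubset.Subset.eventuallyLE hsubJη)
      filter_upwards [ae_restrict_mem measurableSet_Ioc] with κ hκ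
      exact hfnn x κ (hsubη1 hκ)
    calc c * Real.exp (-(3*η/4 * x ^ 2) / 2)
        = ∫ κ in Ioc (η/2) (3*η/4), g κ * Real.exp (-(3*η/4 * x ^ 2) / 2) := by
          rw [integral_mul_const, hcdef]
      _ ≤ N x := le_trans h1 h2
  have hN0 : ∀ x : ℝ, 0 < N x := fun x =>
    lt_of_lt_of_le (by positivity) (hNlow x)
  -- upper bound for T
  have hTup : ∀ x : ℝ, T x ≤ C * Real.exp (-(η * x ^ 2) / 2) := by
    intro x
    have h1 : ∫ κ in Ioo η 1, postDens a L τ x κ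
        ≤ ∫ κ in Ioo η 1, g κ * Real.exp (-(η * x ^ 2) / 2) := by
      refine setIntegral_mono_on ((hfint x).mono_set hsubT1)
        (hgTint.mul_const _) measurableSet_Ioo ?_
      intro κ hκ
      rw [hpost_eq]
      refine mul_le_mul_of_nonneg_left ?_ (hgpos κ (hsubT1 hκ)).le
      apply Real.exp_le_exp.mpr
      have := mul_le_mul_of_nonneg_right hκ.1.le (sq_nonneg x)
      linarith
    calc T x ≤ ∫ κ in Ioo η 1, g κ * Real.exp (-(η * x ^ 2) / 2) := h1
      _ = C * Real.exp (-(η * x ^ 2) / 2) := by rw [integral_mul_const, hCdef]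
  have hTnn : ∀ x : ℝ, 0 ≤ T x := fun x =>
    setIntegral_nonneg measurableSet_Ioo (fun κ hκ => hfnn x κ (hsubT1 hκ))
  -- T/N → 0
  have hratio : ∀ x : ℝ, T x / N x ≤ (C / c) * Real.exp (-(η/8) * x ^ 2) := by
    intro x
    have h1 : T x / N x ≤ (C * Real.exp (-(η * x ^ 2) / 2))
        / (c * Real.exp (-(3*η/4 * x ^ 2) / 2)) := by
      apply div_le_div₀ (by positivity) (hTup x) (by positivity) (hNlow x)
    refine le_trans h1 (le_of_eq ?_)
    have hexp : Real.exp (-(η * x ^ 2) / 2) / Real.exp (-(3*η/4 * x ^ 2) / 2)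
        = Real.exp (-(η/8) * x ^ 2) := by
      rw [← Real.exp_sub]
      congr 1
      ring
    rw [← hexp, div_mul_div_comm]
  have hupper : Tendsto (fun x : ℝ => (C / c) * Real.exp (-(η/8) * x ^ 2)) atTop (𝓝 0) := by
    have hx2 : Tendsto (fun x : ℝ => x ^ 2) atTop atTop :=
      tendsto_pow_atTop (by norm_num)
    have hbot : Tendsto (fun x : ℝ => -(η/8) * x ^ 2) atTop atBot :=
      (tendsto_const_mul_atBot_of_neg (by linarith)).mpr hx2
    have := Real.tendsto_exp_atBot.comp hbot
    have h2 := this.const_mul (C / c)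
    simpa using h2
  have hTN : Tendsto (fun x : ℝ => T x / N x) atTop (𝓝 0) := by
    refine tendsto_of_tendsto_of_tendsto_of_le_of_le tendsto_const_nhds hupper
      (fun x => div_nonneg (hTnn x) (hN0 x).le) hratio
  -- decompose the denominator
  have hdisj : Disjoint (Ioc (0:ℝ) η) (Ioo η 1) := by
    rw [Set.disjoint_left]
    rintro κ ⟨_, h2⟩ ⟨h3, _⟩
    exact absurd h2 (not_le.mpr h3)
  have hD : ∀ x : ℝ, ∫ κ in Ioo (0:ℝ) 1, postDens a L τ x κ = N x + T x := by
    intro x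
    rw [← Ioc_union_Ioo_eq_Ioo hη0.le hη1,
      setIntegral_union hdisj measurableSet_Ioo
        ((hfint x).mono_set hsubη1) ((hfint x).mono_set hsubT1)]
  -- conclude
  have hfinal : ∀ x : ℝ,
      (∫ κ in Ioc (0:ℝ) η, postDens a L τ x κ) /
        (∫ κ in Ioo (0:ℝ) 1, postDens a L τ x κ) = (1 + T x / N x)⁻¹ := by
    intro x
    rw [hD x]
    have hNne : N x ≠ 0 := (hN0 x).ne'
    rw [show (1 + T x / N x) = (N x + T x) / N x by field_simp]
    rw [inv_div]
  have hlim : Tendsto (fun x : ℝ => (1 + T x / N x)⁻¹) atTop (𝓝 1) := by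
    have := (tendsto_const_nhds.add hTN).inv₀ (by norm_num : (1 + 0 : ℝ) ≠ 0)
    simpa using this
  exact hlim.congr (fun x => (hfinal x).symm)
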